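/- arXiv:2105.12445 — 6 statements merged into one kernel-verified Lean document; each statement's English description precedes it below -/
import Mathlib

section
/- For all natural numbers m, n, k it holds that T (T n k) (T n m) = T (T k n) (T k m). In other words, the binary operation n ⋆ k := T n k on ℕ satisfies the cycle-set identity (x ⋆ y) ⋆ (x ⋆ z) = (y ⋆ x) ⋆ (y ⋆ z), so (ℕ, ⋆) is a cycle set. -/
/-- The binary operation `n ⋆ k = T n k`: `T n k = k` if `k ≤ n`, `k + 1` otherwise. -/
def T (n k : ℕ) : ℕ := if k ≤ n then k else k + 1

/-- The cycle-set identity `(x ⋆ y) ⋆ (x ⋆ z) = (y ⋆ x) ⋆ (y ⋆ z)` for `(ℕ, ⋆)`. -/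
theorem T_cycle_set (m n k : ℕ) :
    T (T n k) (T n m) = T (T k n) (T k m) := by
  unfold T
  split_ifs <;> omega
end

section
/- For every natural number n, the map T n : ℕ → ℕ is injective, its range is exactly {k : ℕ | k ≠ n + 1}, and T n n = n. Consequently the cycle set (ℕ, ⋆) with n ⋆ k = T n k is non-degenerate and square-free. -/
/-- For each `n`, `T n` is injective with range `{k | k ≠ n + 1}`, and `T n n = n`:
the cycle set `(ℕ, ⋆)` is non-degenerate and square-free. -/
theorem T_injective_range_squarefree (n : ℕ) :
    Function.Injective (T n) ∧ Set.range (T n) = {k : ℕ | k ≠ n + 1} ∧ T n n = n := by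
  refine ⟨?_, ?_, by simp [T]⟩
  · intro a b h
    unfold T at h
    split_ifs at h with h1 h2 h2 <;> omega
  · ext k
    simp only [Set.mem_range, Set.mem_setOf_eq]
    constructor
    · rintro ⟨a, rfl⟩
      unfold T; split_ifs <;> omega
    · intro hk
      rcases le_or_gt k n with h | h
      · exact ⟨k, by simp [T, h]⟩
      · exact ⟨k - 1, by unfold T; split_ifs <;> omega⟩
end

section
/- Let D = {(i, j) : ℕ × ℕ | j ≠ i + 1} and let R : ℕ × ℕ → ℕ × ℕ be defined by R (i, j) = (σ i j, γ j i). Then R maps D into D, R is a bijection of D onto D, and R ∘ R is the identity on D (i.e. Set.BijOn R D D and R (R p) = p for every p ∈ D). In particular the partial map r of the Thompson partial solution is an involutive bijection of its domain D onto its range D. -/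
/-- `σ n k = k` if `k ≤ n`, `k - 1` otherwise. -/
def sigma' (n k : ℕ) : ℕ := if k ≤ n then k else k - 1

/-- `γ n k = k` if `k ≤ n`, `k + 1` otherwise. -/
def gamma' (n k : ℕ) : ℕ := if k ≤ n then k else k + 1

/-- The domain `D = {(i, j) | j ≠ i + 1}` of the Thompson partial braiding. -/
def D : Set (ℕ × ℕ) := {p | p.2 ≠ p.1 + 1}

/-- The Thompson partial braiding `R (i, j) = (σ i j, γ j i)`. -/
def R (p : ℕ × ℕ) : ℕ × ℕ := (sigma' p.1 p.2, gamma' p.2 p.1)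

lemma R_mapsTo : Set.MapsTo R D D := by
  rintro ⟨i, j⟩ h
  simp only [D, R, sigma', gamma', Set.mem_setOf_eq] at *
  split_ifs <;> omega

lemma R_invol : ∀ p ∈ D, R (R p) = p := by
  rintro ⟨i, j⟩ h
  simp only [D, R, sigma', gamma', Set.mem_setOf_eq, Prod.mk.injEq] at *
  split_ifs <;> omega

/-- `R` is a bijection of `D` onto `D` and is an involution on `D`. -/
theorem R_bijOn_involutive :
    Set.BijOn R D D ∧ ∀ p ∈ D, R (R p) = p := by
  refine ⟨⟨R_mapsTo, ?_, ?_⟩, R_invol⟩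
  · intro p hp q hq h
    rw [← R_invol p hp, ← R_invol q hq, h]
  · intro p hp
    exact ⟨R p, R_mapsTo hp, R_invol p hp⟩
end

section
/- For all natural numbers m, n, k such that all partial maps involved are defined, namely: k ≠ n + 1, n ≠ m + 1, σ n k ≠ m + 1, k ≠ γ n m + 1, and σ (γ n m) k ≠ σ m n + 1, it holds that σ m (σ n k) = σ (σ m n) (σ (γ n m) k). This is the first braided identity σ_x ∘ σ_y = σ_{σ_x(y)} ∘ σ_{γ_y(x)} (with x = m, y = n) for the Thompson partial solution, valid wherever both sides are defined. -/
/-- First braided identity `σ_x ∘ σ_y = σ_{σ_x(y)} ∘ σ_{γ_y(x)}` (with `x = m`, `y = n`),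
valid wherever both sides are defined. -/
theorem braided_first (m n k : ℕ)
    (h1 : k ≠ n + 1) (h2 : n ≠ m + 1) (h3 : sigma' n k ≠ m + 1)
    (h4 : k ≠ gamma' n m + 1) (h5 : sigma' (gamma' n m) k ≠ sigma' m n + 1) :
    sigma' m (sigma' n k) = sigma' (sigma' m n) (sigma' (gamma' n m) k) := by
  simp only [sigma', gamma'] at *
  split_ifs at * <;> omega
end

section
/- For all natural numbers m, i, j with m ≤ i, m ≤ j and j ≠ i + 1, one has m ≤ σ i j and m ≤ γ j i. Consequently, for every m the set Y_m = {k : ℕ | m ≤ k} is an invariant subset of the Thompson partial solution (r maps Y_m × Y_m into Y_m × Y_m wherever it is defined), and the solution decomposes as the disjoint union of the invariant subsets {0} and Y_1; in particular it is decomposable. -/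
/-- For all `m ≤ i`, `m ≤ j` with `j ≠ i + 1`, both components of `r(x_i, x_j)` stay `≥ m`:
each `Y_m = {k | m ≤ k}` is an invariant subset, so the Thompson partial solution
decomposes as `{0} ∪ Y_1` and is decomposable. -/
theorem Ym_invariant (m i j : ℕ) (hi : m ≤ i) (hj : m ≤ j) (h : j ≠ i + 1) :
    m ≤ sigma' i j ∧ m ≤ gamma' j i := by
  unfold sigma' gamma'
  split <;> split <;> omega
end

section
/- Let rels₁ ⊆ FreeGroup ℕ be the set of elements of the form (of i) * (of j) * ((of (σ i j)) * (of (γ j i)))⁻¹ for all i, j : ℕ with j ≠ i + 1, and let rels₂ ⊆ FreeGroup ℕ be the set of elements of the form (of n) * (of k) * ((of k) * (of (n + 1)))⁻¹ for all n, k : ℕ with k < n. Then the presented groups PresentedGroup rels₁ and PresentedGroup rels₂ are isomorphic as groups. (The first is the structure group G(X, r) of the Thompson partial solution; the second is the infinite presentation ⟨x₀, x₁, x₂, … | xₙxₖ = xₖxₙ₊₁, k < n⟩ of Thompson's group F, so G(X, r) ≅ F.) -/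
/-- Relators of the structure group of the Thompson partial solution:
`x_i x_j (x_{σ_i(j)} x_{γ_j(i)})⁻¹` for `j ≠ i + 1`. -/
def rels₁ : Set (FreeGroup ℕ) :=
  {w | ∃ i j : ℕ, j ≠ i + 1 ∧
    w = FreeGroup.of i * FreeGroup.of j *
        (FreeGroup.of (sigma' i j) * FreeGroup.of (gamma' j i))⁻¹}

/-- Relators of the infinite presentation of Thompson's group `F`:
`x_n x_k (x_k x_{n+1})⁻¹` for `k < n`. -/
def rels₂ : Set (FreeGroup ℕ) :=
  {w | ∃ n k : ℕ, k < n ∧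
    w = FreeGroup.of n * FreeGroup.of k *
        (FreeGroup.of k * FreeGroup.of (n + 1))⁻¹}

lemma normalClosure_eq : Subgroup.normalClosure rels₁ = Subgroup.normalClosure rels₂ := by
  apply le_antisymm
  · apply Subgroup.normalClosure_le_normal
    rintro w ⟨i, j, hne, rfl⟩
    rcases lt_trichotomy j i with h | h | h
    · -- j < i : exactly a relator of rels₂
      apply Subgroup.subset_normalClosure
      refine ⟨i, j, h, ?_⟩
      simp [sigma', gamma', h.le, not_le.2 h]
    · -- j = i : trivial relator
      subst h
      have : FreeGroup.of j * FreeGroup.of j * (FreeGroup.of (sigma' j j) * FreeGroup.of (gamma' j j))⁻¹ = 1 := by rw [show sigma' j j = j by simp [sigma'], show gamma' j j = j by simp [gamma']]; group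
      rw [this]; exact one_mem _
    · -- j > i, j ≠ i + 1 so j ≥ i + 2 : inverse of a relator of rels₂
      have hj : i + 2 ≤ j := by omega
      have : FreeGroup.of i * FreeGroup.of j *
          (FreeGroup.of (sigma' i j) * FreeGroup.of (gamma' j i))⁻¹ =
          (FreeGroup.of (j - 1) * FreeGroup.of i *
            (FreeGroup.of i * FreeGroup.of ((j - 1) + 1))⁻¹)⁻¹ := by
        have h1 : (j - 1) + 1 = j := by omega
        have h2 : sigma' i j = j - 1 := by simp [sigma']; omega
        have h3 : gamma' j i = i := by simp [gamma']; omega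
        rw [h1, h2, h3]
        group
      rw [this]
      exact inv_mem (Subgroup.subset_normalClosure ⟨j - 1, i, by omega, rfl⟩)
  · apply Subgroup.normalClosure_mono
    rintro w ⟨n, k, hk, rfl⟩
    refine ⟨n, k, by omega, ?_⟩
    simp [sigma', gamma', hk.le, not_le.2 hk]

/-- The structure group `G(X, r)` of the Thompson partial solution is isomorphic to
Thompson's group `F` (given by its infinite presentation). -/
theorem structure_group_iso_thompsonF :
    Nonempty (PresentedGroup rels₁ ≃* PresentedGroup rels₂) := by
  exact ⟨QuotientGroup.quotientMulEquivOfEq normalClosure_eq⟩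
end
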